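/- For a < b, the hypergraph C_{a,b} whose vertices are the squares of an a×b chessboard and whose edges are the placements of a non-taking rooks (sets of a squares, no two in the same row or column) is strongly connected, and its exact transversals are exactly the rows of the chessboard. -/

import Mathlib

/-- An exact transversal of a hypergraph with edge set `E`: a set of vertices meeting
every edge in exactly one vertex. -/
def ExactTransversal {V : Type*} (E : Set (Finset V)) (S : Set V) : Prop :=
  ∀ e ∈ E, ∃! v, v ∈ e ∧ v ∈ S

/-- A hypergraph is strongly connected if any two edges are connected by a finite
sequence of edges in which consecutive edges have symmetric difference of size two. -/
def StronglyConnectedHG {V : Type*} [DecidableEq V] (E : Set (Finset V)) : Prop :=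
  ∀ e ∈ E, ∀ f ∈ E, ∃ (n : ℕ) (g : ℕ → Finset V), g 0 = e ∧ g n = f ∧
    (∀ i ≤ n, g i ∈ E) ∧ ∀ i < n, (symmDiff (g i) (g (i + 1))).card = 2

/-- The edges of the rook hypergraph: placements of `a` non-taking rooks on an
`a × b` board, i.e. graphs of injective functions `Fin a → Fin b`. -/
def rookEdges (a b : ℕ) : Set (Finset (Fin a × Fin b)) :=
  {s | ∃ f : Fin a → Fin b, Function.Injective f ∧
    s = Finset.univ.image fun i => (i, f i)}

open Finset Function

namespace RookAux

variable {V : Type*} [DecidableEq V]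

def Joined (E : Set (Finset V)) (e f : Finset V) : Prop :=
  ∃ (n : ℕ) (g : ℕ → Finset V), g 0 = e ∧ g n = f ∧
    (∀ i ≤ n, g i ∈ E) ∧ ∀ i < n, (symmDiff (g i) (g (i + 1))).card = 2

lemma Joined.refl {E : Set (Finset V)} {e : Finset V} (he : e ∈ E) : Joined E e e :=
  ⟨0, fun _ => e, rfl, rfl, fun _ _ => he, fun i h => absurd h (Nat.not_lt_zero i)⟩

lemma Joined.cons {E : Set (Finset V)} {e e' f : Finset V} (he : e ∈ E)
    (hstep : (symmDiff e e').card = 2) (h : Joined E e' f) : Joined E e f := by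
  obtain ⟨n, g, hg0, hgn, hmem, hcard⟩ := h
  refine ⟨n + 1, fun k => if k = 0 then e else g (k - 1), rfl, ?_, ?_, ?_⟩
  · simp [hgn]
  · intro i hi
    rcases Nat.eq_zero_or_pos i with rfl | hpos
    · simpa using he
    · have : i ≠ 0 := hpos.ne'
      simp only [this, if_false]
      exact hmem (i - 1) (by omega)
  · intro i hi
    rcases Nat.eq_zero_or_pos i with rfl | hpos
    · simpa [hg0] using hstep
    · have h1 : i ≠ 0 := hpos.ne'
      have h2 : i + 1 ≠ 0 := by omega
      simp only [h1, h2, if_false]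
      have e1 : i + 1 - 1 = i - 1 + 1 := by omega
      rw [e1]
      exact hcard (i - 1) (by omega)

variable {a b : ℕ}

def edgeOf (f : Fin a → Fin b) : Finset (Fin a × Fin b) :=
  Finset.univ.image fun i => (i, f i)

lemma edgeOf_mem (f : Fin a → Fin b) (hf : Function.Injective f) :
    edgeOf f ∈ rookEdges a b := ⟨f, hf, rfl⟩

lemma mem_edgeOf {f : Fin a → Fin b} {v : Fin a × Fin b} :
    v ∈ edgeOf f ↔ v.2 = f v.1 := by
  constructor
  · intro h
    simp only [edgeOf, Finset.mem_image, Finset.mem_univ, true_and] at h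
    obtain ⟨k, hk⟩ := h
    rw [← hk]
  · intro h
    simp only [edgeOf, Finset.mem_image, Finset.mem_univ, true_and]
    exact ⟨v.1, by rw [← h]⟩

lemma symmDiff_update {f : Fin a → Fin b} (hf : Function.Injective f)
    {c : Fin b} (hc : ∀ k, f k ≠ c) (i : Fin a) :
    (symmDiff (edgeOf f) (edgeOf (Function.update f i c))).card = 2 := by
  have h1 : symmDiff (edgeOf f) (edgeOf (Function.update f i c)) = {(i, f i), (i, c)} := by
    ext ⟨v1, v2⟩
    simp only [Finset.mem_symmDiff, mem_edgeOf, Finset.mem_insert, Finset.mem_singleton,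
      Prod.mk.injEq]
    rcases eq_or_ne v1 i with rfl | h
    · simp only [Function.update_self]
      have hfc := hc v1
      constructor
      · rintro (⟨rfl, h2⟩ | ⟨rfl, h2⟩)
        · exact Or.inl ⟨trivial, rfl⟩
        · exact Or.inr ⟨trivial, rfl⟩
      · rintro (⟨-, rfl⟩ | ⟨-, rfl⟩)
        · exact Or.inl ⟨rfl, hfc⟩
        · exact Or.inr ⟨rfl, fun hh => hfc hh.symm⟩
    · simp [Function.update_of_ne h, h]
  rw [h1]
  rw [Finset.card_insert_of_notMem, Finset.card_singleton]
  simp only [Finset.mem_singleton, Prod.mk.injEq, true_and]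
  exact hc i

lemma update_injective {f : Fin a → Fin b} (hf : Function.Injective f)
    {c : Fin b} (hc : ∀ k, f k ≠ c) (i : Fin a) :
    Function.Injective (Function.update f i c) := by
  intro x y hxy
  rcases eq_or_ne x i with hx | hx <;> rcases eq_or_ne y i with hy | hy
  · rw [hx, hy]
  · rw [hx, Function.update_self, Function.update_of_ne hy] at hxy
    exact absurd hxy.symm (hc y)
  · rw [hy, Function.update_self, Function.update_of_ne hx] at hxy
    exact absurd hxy (hc x)
  · rw [Function.update_of_ne hx, Function.update_of_ne hy] at hxy
    exact hf hxy

lemma exists_not_in_range (hab : a < b) (f : Fin a → Fin b) :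
    ∃ c, ∀ k, f k ≠ c := by
  by_contra h
  push_neg at h
  have hsurj : Function.Surjective f := fun c => h c
  have := Fintype.card_le_of_surjective f hsurj
  simp only [Fintype.card_fin] at this
  omega

lemma joined_aux (hab : a < b) : ∀ (n : ℕ) (f g : Fin a → Fin b),
    Function.Injective f → Function.Injective g →
    ((Finset.univ.filter fun k => f k ≠ g k).card ≤ n) →
    Joined (rookEdges a b) (edgeOf f) (edgeOf g) := by
  intro n
  induction n with
  | zero =>
    intro f g hf hg hcard
    have hfg : f = g := by
      funext k
      by_contra hk
      have hmem : k ∈ Finset.univ.filter fun k => f k ≠ g k := by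
        simp [hk]
      have := Finset.card_pos.mpr ⟨k, hmem⟩
      omega
    subst hfg
    exact Joined.refl (edgeOf_mem f hf)
  | succ n ih =>
    intro f g hf hg hcard
    by_cases hfg : f = g
    · subst hfg
      exact Joined.refl (edgeOf_mem f hf)
    have hex : ∃ i, f i ≠ g i := Function.ne_iff.mp hfg
    obtain ⟨i, hi⟩ := hex
    have hiD : i ∈ Finset.univ.filter fun k => f k ≠ g k := by simp [hi]
    obtain ⟨c, hc⟩ := exists_not_in_range hab f
    by_cases hgi : ∃ j, f j = g i
    · obtain ⟨j, hj⟩ := hgi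
      have hij : j ≠ i := fun h => hi (h ▸ hj)
      have hfjgj : f j ≠ g j := by
        rw [hj]
        intro h
        exact hij (hg h).symm
      by_cases hcgj : c = g j
      · -- one step: fix position j
        set f1 := Function.update f j c with hf1def
        have hf1 : Function.Injective f1 := update_injective hf hc j
        have hD : (Finset.univ.filter fun k => f1 k ≠ g k)
            = (Finset.univ.filter fun k => f k ≠ g k).erase j := by
          ext k
          rcases eq_or_ne k j with rfl | hk
          · simp [hf1def, Function.update_self, hcgj]
          · simp [hf1def, Function.update_of_ne hk, hk]
        have hjD : j ∈ Finset.univ.filter fun k => f k ≠ g k := by simp [hfjgj]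
        have hcard1 : (Finset.univ.filter fun k => f1 k ≠ g k).card ≤ n := by
          rw [hD, Finset.card_erase_of_mem hjD]
          omega
        exact (ih f1 g hf1 hg hcard1).cons (edgeOf_mem f hf) (symmDiff_update hf hc j)
      · -- two steps: move position j out of the way, then fix position i
        set f1 := Function.update f j c with hf1def
        have hf1 : Function.Injective f1 := update_injective hf hc j
        have hD1 : (Finset.univ.filter fun k => f1 k ≠ g k)
            = (Finset.univ.filter fun k => f k ≠ g k) := by
          ext k
          rcases eq_or_ne k j with rfl | hk
          · simp [hf1def, Function.update_self, hfjgj, Ne.symm, hcgj]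
          · simp [hf1def, Function.update_of_ne hk]
        have hgi1 : ∀ k, f1 k ≠ g i := by
          intro k
          rcases eq_or_ne k j with rfl | hk
          · rw [hf1def, Function.update_self, ← hj]
            exact fun h => hc k h.symm
          · rw [hf1def, Function.update_of_ne hk, ← hj]
            exact fun h => hk (hf h)
        set f2 := Function.update f1 i (g i) with hf2def
        have hf2 : Function.Injective f2 := update_injective hf1 hgi1 i
        have hf1i : f1 i ≠ g i := by
          rw [hf1def, Function.update_of_ne (Ne.symm hij)]
          exact hi
        have hiD1 : i ∈ Finset.univ.filter fun k => f1 k ≠ g k := by simp [hf1i]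
        have hD2 : (Finset.univ.filter fun k => f2 k ≠ g k)
            = (Finset.univ.filter fun k => f1 k ≠ g k).erase i := by
          ext k
          rcases eq_or_ne k i with rfl | hk
          · simp [hf2def, Function.update_self]
          · simp [hf2def, Function.update_of_ne hk, hk]
        have hcard2 : (Finset.univ.filter fun k => f2 k ≠ g k).card ≤ n := by
          rw [hD2, Finset.card_erase_of_mem hiD1, hD1]
          omega
        exact ((ih f2 g hf2 hg hcard2).cons (edgeOf_mem f1 hf1)
            (symmDiff_update hf1 hgi1 i)).cons (edgeOf_mem f hf) (symmDiff_update hf hc j)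
    · push_neg at hgi
      set f1 := Function.update f i (g i) with hf1def
      have hf1 : Function.Injective f1 := update_injective hf hgi i
      have hD : (Finset.univ.filter fun k => f1 k ≠ g k)
          = (Finset.univ.filter fun k => f k ≠ g k).erase i := by
        ext k
        rcases eq_or_ne k i with rfl | hk
        · simp [hf1def, Function.update_self]
        · simp [hf1def, Function.update_of_ne hk, hk]
      have hcard1 : (Finset.univ.filter fun k => f1 k ≠ g k).card ≤ n := by
        rw [hD, Finset.card_erase_of_mem hiD]
        omega
      exact (ih f1 g hf1 hg hcard1).cons (edgeOf_mem f hf) (symmDiff_update hf hgi i)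

lemma exists_inj_through (hab : a ≤ b) (i : Fin a) (j : Fin b) :
    ∃ f : Fin a → Fin b, Function.Injective f ∧ f i = j := by
  refine ⟨fun k => Equiv.swap (Fin.castLE hab i) j (Fin.castLE hab k), ?_, ?_⟩
  · exact (Equiv.injective _).comp (Fin.castLE_injective hab)
  · exact Equiv.swap_apply_left _ _

lemma exists_inj_through2 (hab : a ≤ b) {i i' : Fin a} {j j' : Fin b}
    (hii : i ≠ i') (hjj : j ≠ j') :
    ∃ f : Fin a → Fin b, Function.Injective f ∧ f i = j ∧ f i' = j' := by
  obtain ⟨f, hf, hfi⟩ := exists_inj_through hab i j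
  refine ⟨fun k => Equiv.swap (f i') j' (f k), (Equiv.injective _).comp hf, ?_,
    Equiv.swap_apply_left _ _⟩
  show Equiv.swap (f i') j' (f i) = j
  rw [hfi]
  exact Equiv.swap_apply_of_ne_of_ne (fun h => hii (hf (hfi.trans h))) hjj

lemma exists_inj_avoiding (hab : a < b) (j : Fin b) :
    ∃ f : Fin a → Fin b, Function.Injective f ∧ ∀ k, f k ≠ j := by
  refine ⟨fun k => ⟨if (k : ℕ) < (j : ℕ) then (k : ℕ) else (k : ℕ) + 1,
      by have := k.isLt; split <;> omega⟩, ?_, ?_⟩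
  · intro x y h
    have h2 := congrArg Fin.val h
    simp only at h2
    apply Fin.ext
    split_ifs at h2 <;> omega
  · intro k h
    have h2 := congrArg Fin.val h
    simp only at h2
    split_ifs at h2 <;> omega

end RookAux


open RookAux in
theorem rook_hypergraph_stronglyConnected_rows (a b : ℕ) (hab : a < b) :
    StronglyConnectedHG (rookEdges a b) ∧
      ∀ S : Set (Fin a × Fin b),
        ExactTransversal (rookEdges a b) S ↔ ∃ i : Fin a, S = {p | p.1 = i} := by
  constructor
  · -- strong connectivity
    rintro e ⟨p, hp, rfl⟩ f ⟨q, hq, rfl⟩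
    have := joined_aux hab a p q hp hq
      (le_trans (Finset.card_filter_le _ _) (by simp))
    exact this
  · intro S
    constructor
    · intro hS
      -- base point
      obtain ⟨v0, ⟨hv0e, hv0S⟩, -⟩ :=
        hS (edgeOf (Fin.castLE hab.le)) (edgeOf_mem _ (Fin.castLE_injective hab.le))
      -- all elements of S lie in one row
      have hrow : ∀ p ∈ S, ∀ q ∈ S, p.1 = q.1 := by
        intro p hp q hq
        by_contra hpq
        rcases eq_or_ne p.2 q.2 with hcol | hcol
        · -- same column: S is contained in that column, contradiction with avoiding edge
          have hScol : ∀ r ∈ S, r.2 = p.2 := by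
            intro r hr
            by_contra hrne
            rcases eq_or_ne r.1 p.1 with hrp | hrp
            · -- r in same row as p, use q
              have hrq : r.1 ≠ q.1 := by rw [hrp]; exact hpq
              have hrq2 : r.2 ≠ q.2 := by rw [← hcol]; exact hrne
              obtain ⟨f, hf, hfr, hfq⟩ := exists_inj_through2 hab.le hrq hrq2
              obtain ⟨v, -, huniq⟩ := hS (edgeOf f) (edgeOf_mem f hf)
              have h1 := huniq r ⟨mem_edgeOf.mpr hfr.symm, hr⟩
              have h2 := huniq q ⟨mem_edgeOf.mpr hfq.symm, hq⟩
              rw [← h2] at h1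
              exact hrq (congrArg Prod.fst h1)
            · obtain ⟨f, hf, hfr, hfp⟩ := exists_inj_through2 hab.le hrp hrne
              obtain ⟨v, -, huniq⟩ := hS (edgeOf f) (edgeOf_mem f hf)
              have h1 := huniq r ⟨mem_edgeOf.mpr hfr.symm, hr⟩
              have h2 := huniq p ⟨mem_edgeOf.mpr hfp.symm, hp⟩
              rw [← h2] at h1
              exact hrp (congrArg Prod.fst h1)
          obtain ⟨f, hf, hfa⟩ := exists_inj_avoiding hab p.2
          obtain ⟨v, ⟨hve, hvS⟩, -⟩ := hS (edgeOf f) (edgeOf_mem f hf)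
          have := hScol v hvS
          rw [mem_edgeOf] at hve
          exact hfa v.1 (by rw [← hve, this])
        · obtain ⟨f, hf, hfp, hfq⟩ := exists_inj_through2 hab.le hpq hcol
          obtain ⟨v, -, huniq⟩ := hS (edgeOf f) (edgeOf_mem f hf)
          have h1 := huniq p ⟨mem_edgeOf.mpr hfp.symm, hp⟩
          have h2 := huniq q ⟨mem_edgeOf.mpr hfq.symm, hq⟩
          rw [← h2] at h1
          exact hpq (congrArg Prod.fst h1)
      refine ⟨v0.1, ?_⟩
      ext p
      simp only [Set.mem_setOf_eq]
      constructor
      · intro hp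
        exact hrow p hp v0 hv0S
      · intro hp
        -- every square of the row is in S
        obtain ⟨f, hf, hfi⟩ := exists_inj_through hab.le v0.1 p.2
        obtain ⟨v, ⟨hve, hvS⟩, -⟩ := hS (edgeOf f) (edgeOf_mem f hf)
        have hv1 : v.1 = v0.1 := hrow v hvS v0 hv0S
        rw [mem_edgeOf] at hve
        have : v = p := by
          apply Prod.ext
          · rw [hv1, hp]
          · rw [hve, hv1, hfi]
        rwa [this] at hvS
    · rintro ⟨i, rfl⟩ e ⟨f, hf, rfl⟩
      refine ⟨(i, f i), ⟨?_, rfl⟩, ?_⟩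
      · exact mem_edgeOf.mpr rfl
      · rintro ⟨v1, v2⟩ ⟨hve, hvS⟩
        have hve2 : v2 = f v1 := mem_edgeOf.mp hve
        simp only [Set.mem_setOf_eq] at hvS
        subst hvS
        try simp only at hve2
        rw [hve2]
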